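/- Optimality of r = 1 for sampled GRR: for every real ε > 0, all positive integers n and d, every integer c ≥ 2, and every integer r with 1 ≤ r ≤ d, the sampled GRR variance satisfies d·(e^{ε} + c − 2)/(n·(e^{ε} − 1)²) ≤ d·(e^{ε/r} + c − 2)/(n·r·(e^{ε/r} − 1)²); that is, σ²₂,GRR(r) = d·(e^{ε/r} + c − 2)/(n·r·(e^{ε/r} − 1)²) attains its minimum over r ∈ {1, …, d} at r = 1. -/

import Mathlib

/-- Optimality of `r = 1` for sampled GRR: the sampled GRR variance
`σ²₂,GRR(r) = d·(e^{ε/r} + c − 2)/(n·r·(e^{ε/r} − 1)²)` attains its minimum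
over `r ∈ {1, …, d}` at `r = 1`. -/
theorem sampled_grr_optimal_r_one (ε : ℝ) (hε : 0 < ε) (n d : ℕ) (hn : 0 < n) (hd : 0 < d)
    (c : ℕ) (hc : 2 ≤ c) (r : ℕ) (hr1 : 1 ≤ r) (hrd : r ≤ d) :
    (d : ℝ) * (Real.exp ε + (c : ℝ) - 2) / ((n : ℝ) * (Real.exp ε - 1) ^ 2)
      ≤ (d : ℝ) * (Real.exp (ε / (r : ℝ)) + (c : ℝ) - 2)
          / ((n : ℝ) * (r : ℝ) * (Real.exp (ε / (r : ℝ)) - 1) ^ 2) := by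
  have hr : (1:ℝ) ≤ (r:ℝ) := by exact_mod_cast hr1
  have hrpos : (0:ℝ) < (r:ℝ) := by linarith
  have hnpos : (0:ℝ) < (n:ℝ) := by exact_mod_cast hn
  have hdpos : (0:ℝ) < (d:ℝ) := by exact_mod_cast hd
  have hcr : (2:ℝ) ≤ (c:ℝ) := by exact_mod_cast hc
  set x := ε / (r:ℝ) with hxdef
  have hx : 0 < x := div_pos hε hrpos
  have hA : 0 < Real.exp x - 1 := by
    have := Real.add_one_lt_exp hx.ne'
    linarith
  have hεx : ε = (r:ℝ) * x := by rw [hxdef, mul_div_assoc']; exact (mul_div_cancel_left₀ ε hrpos.ne').symm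
  have hexp : Real.exp ε = Real.exp x ^ r := by
    rw [hεx, Real.exp_nat_mul]
  have hB : (r:ℝ) * (Real.exp x - 1) ≤ Real.exp ε - 1 := by
    have hber : 1 + (r:ℕ) * (Real.exp x - 1) ≤ (1 + (Real.exp x - 1)) ^ (r:ℕ) :=
      one_add_mul_le_pow (by linarith) r
    have : (1 + (Real.exp x - 1)) ^ (r:ℕ) = Real.exp ε := by
      rw [hexp]; ring_nf
    linarith [hber.trans_eq this]
  have hBA : Real.exp x - 1 ≤ Real.exp ε - 1 := by nlinarith
  have hBpos : 0 < Real.exp ε - 1 := by nlinarith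
  rw [div_le_div_iff₀ (by positivity) (by positivity)]
  have key : (r:ℝ) * (Real.exp x - 1)^2 * (Real.exp ε + (c:ℝ) - 2)
      ≤ (Real.exp ε - 1)^2 * (Real.exp x + (c:ℝ) - 2) := by
    have h1 : (r:ℝ) * (Real.exp x - 1) * (Real.exp ε - 1) ≤ (Real.exp ε - 1) * (Real.exp ε - 1) :=
      mul_le_mul_of_nonneg_right hB hBpos.le
    have h2 : ((r:ℝ) * (Real.exp x - 1)) * ((r:ℝ) * (Real.exp x - 1)) ≤ (Real.exp ε - 1) * (Real.exp ε - 1) :=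
      mul_le_mul hB hB (by positivity) hBpos.le
    have h3 : (r:ℝ) * (Real.exp x - 1)^2 ≤ ((r:ℝ) * (Real.exp x - 1)) * ((r:ℝ) * (Real.exp x - 1)) := by
      nlinarith [mul_pos hA hA]
    nlinarith [mul_le_mul_of_nonneg_left h1 hA.le,
      mul_le_mul_of_nonneg_right (h3.trans h2) (by linarith : (0:ℝ) ≤ (c:ℝ) - 1)]
  nlinarith [mul_le_mul_of_nonneg_left key (mul_pos hdpos hnpos).le]
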